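/- arXiv:1705.01454 — 6 statements merged into one kernel-verified Lean document; each statement's English description precedes it below -/
import Mathlib

section
/- Every nonempty compact subset of ℝ^n has at least one extreme point, where a point x of a (not necessarily convex) set S is an extreme point if whenever x lies in the open segment {θy + (1−θ)z : θ ∈ (0,1)} with y, z ∈ S and this entire open segment is contained in S, then x = y = z. -/
/-- Extreme point of a (not necessarily convex) set `S`: a point of `S` that is not
an interior point of any line segment whose open part is contained in `S`. -/
def ExtremePt {E : Type*} [AddCommGroup E] [Module ℝ E] (S : Set E) (x : E) : Prop :=
  x ∈ S ∧ ∀ y ∈ S, ∀ z ∈ S, openSegment ℝ y z ⊆ S → x ∈ openSegment ℝ y z →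
    x = y ∧ x = z

/-- Every nonempty compact subset of ℝⁿ has an extreme point. -/
theorem stmt4 {n : ℕ} (S : Set (Fin n → ℝ)) (hne : S.Nonempty) (hS : IsCompact S) :
    ∃ x, ExtremePt S x := by
  set q : (Fin n → ℝ) → ℝ := fun v => ∑ i, v i ^ 2 with hq
  have hqc : Continuous q := by
    apply continuous_finset_sum
    intro i _
    exact (continuous_apply i).pow 2
  obtain ⟨x, hxS, hmax⟩ := hS.exists_isMaxOn hne hqc.continuousOn
  refine ⟨x, hxS, ?_⟩
  intro y hy z hz _ hxseg
  obtain ⟨a, b, ha, hb, hab, hx⟩ := hxseg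
  -- key identity: q (a•y + b•z) = a * q y + b * q z - a*b* q (y - z)
  have key : q (a • y + b • z) = a * q y + b * q z - a * b * q (y - z) := by
    simp only [hq, Pi.add_apply, Pi.smul_apply, Pi.sub_apply, smul_eq_mul,
      Finset.mul_sum, ← Finset.sum_sub_distrib, ← Finset.sum_add_distrib]
    apply Finset.sum_congr rfl
    intro i _
    have hb' : b = 1 - a := by linarith
    subst hb'; ring
  have hqy : q y ≤ q x := hmax hy
  have hqz : q z ≤ q x := hmax hz
  rw [hx] at key
  have e : a * q x + b * q x = q x := by rw [← add_mul, hab, one_mul]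
  have h1 : a * b * q (y - z) ≤ a * b * 0 := by
    have hy' := mul_le_mul_of_nonneg_left hqy ha.le
    have hz' := mul_le_mul_of_nonneg_left hqz hb.le
    linarith
  have hyz : q (y - z) ≤ 0 := le_of_mul_le_mul_left h1 (mul_pos ha hb)
  have hyz0 : y - z = 0 := by
    funext i
    have h1 : (y i - z i) ^ 2 ≤ q (y - z) := by
      simpa [hq] using Finset.single_le_sum
        (f := fun j => ((y - z) j) ^ 2) (fun j _ => sq_nonneg _) (Finset.mem_univ i)
    have : (y i - z i) ^ 2 = 0 := le_antisymm (h1.trans hyz) (sq_nonneg _)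
    have := pow_eq_zero_iff (n := 2) (by norm_num) |>.mp this
    simpa using this
  have hyz' : y = z := sub_eq_zero.mp hyz0
  subst hyz'
  have : x = y := by
    rw [← hx, ← add_smul, hab, one_smul]
  exact ⟨this, this⟩
end

section
/- For a finite strategic game, every extreme point (in the generalized non-convex sense) of the noncooperative payoff region S_nc is a pure-payoff profile: if v is an extreme point of S_nc, then v = u(a) for some pure-strategy profile a ∈ ∏_{i∈N} A_i. -/
/-- The multilinear extension of the payoff function of a finite strategic game. -/
noncomputable def mixedPayoff {n : ℕ} {m : Fin n → ℕ}
    (u : (∀ i, Fin (m i)) → (Fin n → ℝ)) (σ : ∀ i, Fin (m i) → ℝ) : Fin n → ℝ :=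
  fun j => ∑ a : ∀ i, Fin (m i), (∏ i, σ i (a i)) * u a j

open Finset

def pureVec {k : ℕ} (l : Fin k) : Fin k → ℝ := fun j => if j = l then 1 else 0

lemma pureVec_mem {k : ℕ} (l : Fin k) : pureVec l ∈ stdSimplex ℝ (Fin k) := by
  constructor
  · intro x; unfold pureVec; split <;> norm_num
  · simp [pureVec]

lemma update_eval {n : ℕ} {m : Fin n → ℕ} (σ : ∀ i, Fin (m i) → ℝ) (i : Fin n)
    (c : Fin (m i) → ℝ) (a : ∀ i, Fin (m i)) :
    (fun i' => Function.update σ i c i' (a i')) =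
      Function.update (fun i' => σ i' (a i')) i (c (a i)) := by
  funext i'
  by_cases h : i' = i
  · subst h; simp
  · simp [Function.update_of_ne h]

lemma mixedPayoff_update_comb {n : ℕ} {m : Fin n → ℕ}
    (u : (∀ i, Fin (m i)) → (Fin n → ℝ)) (σ : ∀ i, Fin (m i) → ℝ) (i : Fin n)
    (x y : Fin (m i) → ℝ) (a b : ℝ) :
    mixedPayoff u (Function.update σ i (a • x + b • y)) =
      a • mixedPayoff u (Function.update σ i x) + b • mixedPayoff u (Function.update σ i y) := by
  funext j
  simp only [mixedPayoff, Pi.add_apply, Pi.smul_apply, smul_eq_mul]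
  rw [Finset.mul_sum, Finset.mul_sum, ← Finset.sum_add_distrib]
  refine Finset.sum_congr rfl fun c _ => ?_
  rw [update_eval, update_eval, update_eval,
    Finset.prod_update_of_mem (Finset.mem_univ i),
    Finset.prod_update_of_mem (Finset.mem_univ i),
    Finset.prod_update_of_mem (Finset.mem_univ i)]
  simp only [Pi.add_apply, Pi.smul_apply, smul_eq_mul]
  ring

lemma update_feasible {n : ℕ} {m : Fin n → ℕ} {σ : ∀ i, Fin (m i) → ℝ}
    (hσ : ∀ i, σ i ∈ stdSimplex ℝ (Fin (m i))) (i : Fin n) {c : Fin (m i) → ℝ}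
    (hc : c ∈ stdSimplex ℝ (Fin (m i))) :
    ∀ i', Function.update σ i c i' ∈ stdSimplex ℝ (Fin (m i')) := by
  intro i'
  by_cases h : i' = i
  · subst h; simpa using hc
  · simpa [Function.update_of_ne h] using hσ i'

lemma purify {n : ℕ} {m : Fin n → ℕ} (u : (∀ i, Fin (m i)) → (Fin n → ℝ))
    (v : Fin n → ℝ)
    (hv : ExtremePt (mixedPayoff u '' {σ | ∀ i, σ i ∈ stdSimplex ℝ (Fin (m i))}) v)
    (σ : ∀ i, Fin (m i) → ℝ) (hσ : ∀ i, σ i ∈ stdSimplex ℝ (Fin (m i)))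
    (hσv : mixedPayoff u σ = v) (i : Fin n) :
    ∃ k : Fin (m i), mixedPayoff u (Function.update σ i (pureVec k)) = v := by
  obtain ⟨hpos, hsum⟩ := hσ i
  -- find k with σ i k > 0
  have hk : ∃ k, 0 < σ i k := by
    by_contra h
    push_neg at h
    have : ∀ k ∈ Finset.univ, σ i k = 0 := fun k _ => le_antisymm (h k) (hpos k)
    rw [Finset.sum_eq_zero this] at hsum
    norm_num at hsum
  obtain ⟨k, hkpos⟩ := hk
  refine ⟨k, ?_⟩
  set t := σ i k with ht
  have ht1 : t ≤ 1 := by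
    calc t = ∑ l ∈ {k}, σ i l := by simp [ht]
    _ ≤ ∑ l, σ i l := Finset.sum_le_sum_of_subset_of_nonneg (Finset.subset_univ _)
        (fun l _ _ => hpos l)
    _ = 1 := hsum
  rcases eq_or_lt_of_le ht1 with heq | hlt
  · -- σ i = pureVec k
    have hpure : σ i = pureVec k := by
      funext l
      by_cases hl : l = k
      · subst hl
        have : σ i l = 1 := heq
        simp [pureVec, this]
      · have herase : ∑ l ∈ Finset.univ.erase k, σ i l = 0 := by
          have := Finset.add_sum_erase Finset.univ (σ i) (Finset.mem_univ k)
          rw [hsum] at this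
          linarith [this, heq]
        have := (Finset.sum_eq_zero_iff_of_nonneg (fun l _ => hpos l)).mp herase l
          (Finset.mem_erase.mpr ⟨hl, Finset.mem_univ l⟩)
        simp [pureVec, hl, this]
    rw [← hpure, Function.update_eq_self, hσv]
  · -- 0 < t < 1 : split σ i
    have hs : (0:ℝ) < 1 - t := by linarith
    set τ : Fin (m i) → ℝ := fun l => (σ i l - if l = k then t else 0) / (1 - t) with hτ
    have hτmem : τ ∈ stdSimplex ℝ (Fin (m i)) := by
      constructor
      · intro l
        by_cases hl : l = k
        · subst hl
          show 0 ≤ (σ i l - if l = l then t else 0) / (1 - t)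
          rw [if_pos rfl, ← ht, sub_self, zero_div]
        · show 0 ≤ (σ i l - if l = k then t else 0) / (1 - t)
          rw [if_neg hl, sub_zero]
          exact div_nonneg (hpos l) hs.le
      · rw [hτ]
        rw [← Finset.sum_div, Finset.sum_sub_distrib, hsum]
        simp [ne_of_gt hs]
    have hdecomp : σ i = t • pureVec k + (1 - t) • τ := by
      funext l
      by_cases hl : l = k
      · subst hl
        show σ i l = t * pureVec l l + (1 - t) * ((σ i l - if l = l then t else 0) / (1 - t))
        rw [if_pos rfl]
        field_simp [pureVec]
        simp [pureVec]
      · show σ i l = t * pureVec k l + (1 - t) * ((σ i l - if l = k then t else 0) / (1 - t))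
        rw [if_neg hl]
        field_simp [pureVec, hl]
        simp [pureVec, hl]
    set X := mixedPayoff u (Function.update σ i (pureVec k)) with hX
    set Y := mixedPayoff u (Function.update σ i τ) with hY
    have hlin : ∀ a b : ℝ,
        mixedPayoff u (Function.update σ i (a • pureVec k + b • τ)) = a • X + b • Y :=
      fun a b => mixedPayoff_update_comb u σ i _ _ a b
    have hvmem : v = t • X + (1 - t) • Y := by
      rw [← hlin t (1 - t), ← hdecomp, Function.update_eq_self, hσv]
    have hXS : X ∈ mixedPayoff u '' {σ | ∀ i, σ i ∈ stdSimplex ℝ (Fin (m i))} :=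
      ⟨_, update_feasible hσ i (pureVec_mem k), rfl⟩
    have hYS : Y ∈ mixedPayoff u '' {σ | ∀ i, σ i ∈ stdSimplex ℝ (Fin (m i))} :=
      ⟨_, update_feasible hσ i hτmem, rfl⟩
    have hseg : openSegment ℝ X Y ⊆
        mixedPayoff u '' {σ | ∀ i, σ i ∈ stdSimplex ℝ (Fin (m i))} := by
      rintro p ⟨a, b, ha, hb, hab, rfl⟩
      refine ⟨Function.update σ i (a • pureVec k + b • τ), update_feasible hσ i ?_, hlin a b⟩
      exact (convex_stdSimplex ℝ (Fin (m i))) (pureVec_mem k) hτmem ha.le hb.le hab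
    have hvseg : v ∈ openSegment ℝ X Y :=
      ⟨t, 1 - t, hkpos, by linarith, by ring, hvmem.symm⟩
    exact ((hv.2 X hXS Y hYS hseg hvseg).1).symm

lemma mixedPayoff_pure {n : ℕ} {m : Fin n → ℕ} (u : (∀ i, Fin (m i)) → (Fin n → ℝ))
    (a : ∀ i, Fin (m i)) : mixedPayoff u (fun i => pureVec (a i)) = u a := by
  funext j
  simp only [mixedPayoff]
  rw [Finset.sum_eq_single a]
  · simp [pureVec]
  · intro b _ hb
    obtain ⟨i, hi⟩ := Function.ne_iff.mp hb
    rw [Finset.prod_eq_zero (Finset.mem_univ i)]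
    · ring
    · simp [pureVec, hi]
  · simp

/-- Every extreme point of the noncooperative payoff region is a
pure-payoff profile. -/
theorem stmt7 {n : ℕ} (m : Fin n → ℕ) (u : (∀ i, Fin (m i)) → (Fin n → ℝ))
    (v : Fin n → ℝ)
    (hv : ExtremePt (mixedPayoff u '' {σ | ∀ i, σ i ∈ stdSimplex ℝ (Fin (m i))}) v) :
    ∃ a : ∀ i, Fin (m i), v = u a := by
  have key : ∀ s : Finset (Fin n), ∃ σ : ∀ i, Fin (m i) → ℝ,
      (∀ i, σ i ∈ stdSimplex ℝ (Fin (m i))) ∧ mixedPayoff u σ = v ∧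
      ∀ i ∈ s, ∃ k, σ i = pureVec k := by
    intro s
    induction s using Finset.induction_on with
    | empty =>
      obtain ⟨σ, hσ, hσv⟩ := hv.1
      exact ⟨σ, hσ, hσv, by simp⟩
    | @insert i s hi ih =>
      obtain ⟨σ, hσ, hσv, hpure⟩ := ih
      obtain ⟨k, hk⟩ := purify u v hv σ hσ hσv i
      refine ⟨Function.update σ i (pureVec k), update_feasible hσ i (pureVec_mem k), hk, ?_⟩
      intro j hj
      rcases Finset.mem_insert.mp hj with rfl | hj2
      · exact ⟨k, Function.update_self _ _ _⟩
      · obtain ⟨l, hl⟩ := hpure j hj2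
        exact ⟨l, by rwa [Function.update_of_ne (by rintro rfl; exact hi hj2)]⟩
  obtain ⟨σ, hσ, hσv, hpure⟩ := key Finset.univ
  choose a ha using fun i => hpure i (Finset.mem_univ i)
  refine ⟨a, ?_⟩
  rw [← hσv, show σ = fun i => pureVec (a i) from funext ha, mixedPayoff_pure]
end

section
/- For a finite strategic game, ∅ ≠ ext(S_co) ⊆ ext(S_nc) ⊆ S_pu: the set of extreme points of the cooperative payoff region is nonempty, every such extreme point is an extreme point of the noncooperative payoff region, and every extreme point of the noncooperative payoff region is a pure-payoff profile. -/
variable {n : ℕ} {m : Fin n → ℕ} (u : (∀ i, Fin (m i)) → (Fin n → ℝ))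

lemma mixedPayoff_eq_pure (σ : ∀ i, Fin (m i) → ℝ)
    (hσ : ∀ i, σ i ∈ stdSimplex ℝ (Fin (m i)))
    (a : ∀ i, Fin (m i)) (ha : ∀ i k, k ≠ a i → σ i k = 0) :
    mixedPayoff u σ = u a := by
  have h1 : ∀ i, σ i (a i) = 1 := by
    intro i
    have hsum := (hσ i).2
    rwa [Finset.sum_eq_single (a i) (fun k _ hk => ha i k hk) (by simp)] at hsum
  funext j
  unfold mixedPayoff
  rw [Finset.sum_eq_single a]
  · simp [h1]
  · intro b _ hb
    obtain ⟨i, hi⟩ := Function.ne_iff.mp hb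
    rw [Finset.prod_eq_zero (Finset.mem_univ i) (ha i _ hi), zero_mul]
  · simp

lemma mixedPayoff_update (σ : ∀ i, Fin (m i) → ℝ) (i : Fin n) (c₁ c₂ : ℝ)
    (τ₁ τ₂ : Fin (m i) → ℝ) :
    mixedPayoff u (Function.update σ i (c₁ • τ₁ + c₂ • τ₂)) =
      c₁ • mixedPayoff u (Function.update σ i τ₁) +
        c₂ • mixedPayoff u (Function.update σ i τ₂) := by
  have key : ∀ (τ : Fin (m i) → ℝ) (a : ∀ i, Fin (m i)),
      (∏ i', Function.update σ i τ i' (a i')) =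
        τ (a i) * ∏ i' ∈ Finset.univ.erase i, σ i' (a i') := by
    intro τ a
    rw [← Finset.mul_prod_erase Finset.univ _ (Finset.mem_univ i)]
    congr 1
    · simp
    · exact Finset.prod_congr rfl fun i' hi' => by
        rw [Function.update_of_ne (Finset.ne_of_mem_erase hi')]
  funext j
  simp only [mixedPayoff, Pi.add_apply, Pi.smul_apply, smul_eq_mul, key]
  rw [Finset.mul_sum, Finset.mul_sum, ← Finset.sum_add_distrib]
  exact Finset.sum_congr rfl fun a _ => by ring

lemma weights_sum (σ : ∀ i, Fin (m i) → ℝ)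
    (hσ : ∀ i, σ i ∈ stdSimplex ℝ (Fin (m i))) :
    ∑ a : ∀ i, Fin (m i), ∏ i, σ i (a i) = 1 := by
  have h := Finset.prod_univ_sum (fun i => (Finset.univ : Finset (Fin (m i))))
    (fun i j => σ i j)
  rw [Fintype.piFinset_univ] at h
  rw [← h]
  exact Finset.prod_eq_one fun i _ => (hσ i).2

lemma mixedPayoff_mem_hull (σ : ∀ i, Fin (m i) → ℝ)
    (hσ : ∀ i, σ i ∈ stdSimplex ℝ (Fin (m i))) :
    mixedPayoff u σ ∈ convexHull ℝ (Set.range u) := by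
  have heq : mixedPayoff u σ = ∑ a : ∀ i, Fin (m i), (∏ i, σ i (a i)) • u a := by
    funext j; simp [mixedPayoff, Finset.sum_apply]
  rw [heq]
  exact (convex_convexHull ℝ _).sum_mem
    (fun a _ => Finset.prod_nonneg fun i _ => (hσ i).1 _)
    (weights_sum σ hσ) (fun a _ => subset_convexHull ℝ _ (Set.mem_range_self a))

lemma pure_mem_S (a : ∀ i, Fin (m i)) :
    u a ∈ mixedPayoff u '' {σ | ∀ i, σ i ∈ stdSimplex ℝ (Fin (m i))} := by
  have hmem : ∀ i, Pi.single (a i) (1:ℝ) ∈ stdSimplex ℝ (Fin (m i)) := by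
    intro i
    refine ⟨fun k => ?_, by simp⟩
    by_cases h : k = a i <;> simp [Pi.single_apply, h]
  exact ⟨fun i => Pi.single (a i) 1, hmem,
    mixedPayoff_eq_pure u _ hmem a (fun i k hk => Pi.single_eq_of_ne hk 1)⟩

lemma extremePt_aux (x : Fin n → ℝ)
    (hX : ∀ y ∈ mixedPayoff u '' {σ | ∀ i, σ i ∈ stdSimplex ℝ (Fin (m i))},
      ∀ z ∈ mixedPayoff u '' {σ | ∀ i, σ i ∈ stdSimplex ℝ (Fin (m i))},
      openSegment ℝ y z ⊆ mixedPayoff u '' {σ | ∀ i, σ i ∈ stdSimplex ℝ (Fin (m i))} →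
      x ∈ openSegment ℝ y z → x = y ∧ x = z) :
    ∀ N (σ : ∀ i, Fin (m i) → ℝ), (∀ i, σ i ∈ stdSimplex ℝ (Fin (m i))) →
      (∑ i, (Finset.univ.filter fun k => σ i k ≠ 0).card) ≤ N →
      mixedPayoff u σ = x → x ∈ Set.range u := by
  intro N
  induction N with
  | zero =>
    intro σ hσ hcard hmx
    have hF : ∀ i : Fin n, False := by
      intro i
      have hex : ∃ k, σ i k ≠ 0 := by
        by_contra h; push_neg at h
        have := (hσ i).2
        simp [h] at this
      obtain ⟨k, hk⟩ := hex
      have h0 : (Finset.univ.filter fun k => σ i k ≠ 0).card = 0 := by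
        have := Finset.sum_eq_zero_iff.mp (Nat.le_zero.mp hcard)
        exact this i (Finset.mem_univ i)
      have : k ∈ Finset.univ.filter fun k => σ i k ≠ 0 := by simp [hk]
      rw [Finset.card_eq_zero.mp h0] at this
      exact absurd this (Finset.notMem_empty k)
    exact ⟨fun i => (hF i).elim,
      (mixedPayoff_eq_pure u σ hσ _ (fun i => (hF i).elim)).symm.trans hmx⟩
  | succ N ih =>
    intro σ hσ hcard hmx
    have hex : ∀ i, ∃ k, σ i k ≠ 0 := by
      intro i
      by_contra h; push_neg at h
      have := (hσ i).2
      simp [h] at this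
    choose a hA using hex
    by_cases hpure : ∀ i, ∀ k, k ≠ a i → σ i k = 0
    · exact ⟨a, (mixedPayoff_eq_pure u σ hσ a hpure).symm.trans hmx⟩
    push_neg at hpure
    obtain ⟨i, k, hk_ne, hk0⟩ := hpure
    obtain ⟨k₀, l₀, hne, hk₀, hl₀, hle⟩ :
        ∃ k₀ l₀ : Fin (m i), k₀ ≠ l₀ ∧ σ i k₀ ≠ 0 ∧ σ i l₀ ≠ 0 ∧ σ i l₀ ≤ σ i k₀ := by
      rcases le_total (σ i k) (σ i (a i)) with h | h
      · exact ⟨a i, k, Ne.symm hk_ne, hA i, hk0, h⟩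
      · exact ⟨k, a i, hk_ne, hk0, hA i, h⟩
    set ε := σ i l₀ with hε
    have hεpos : 0 < ε := lt_of_le_of_ne ((hσ i).1 l₀) (Ne.symm hl₀)
    set d : Fin (m i) → ℝ := Pi.single k₀ 1 - Pi.single l₀ 1 with hd
    set p : Fin (m i) → ℝ := σ i - ε • d with hp
    set q : Fin (m i) → ℝ := σ i + ε • d with hq
    have hdval : ∀ j, d j = (if j = k₀ then 1 else 0) - (if j = l₀ then 1 else 0) := by
      intro j; simp [hd, Pi.single_apply]
    have hql : q l₀ = 0 := by
      simp [hq, hdval, Ne.symm hne, hε]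
    have hqk : q k₀ = σ i k₀ + ε := by simp [hq, hdval, hne]
    have hqo : ∀ j, j ≠ k₀ → j ≠ l₀ → q j = σ i j := by
      intro j h1 h2; simp [hq, hdval, h1, h2]
    have hdsum : ∑ j, d j = 0 := by
      simp [hdval, Finset.sum_sub_distrib]
    have hq_mem : q ∈ stdSimplex ℝ (Fin (m i)) := by
      constructor
      · intro j
        rcases eq_or_ne j k₀ with rfl | h1
        · rw [hqk]; have := (hσ i).1 j; linarith
        rcases eq_or_ne j l₀ with rfl | h2
        · rw [hql]
        · rw [hqo j h1 h2]; exact (hσ i).1 j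
      · have : ∑ j, q j = ∑ j, σ i j + ε * ∑ j, d j := by
          simp [hq, Finset.sum_add_distrib, Finset.mul_sum]
        rw [this, hdsum, (hσ i).2]; ring
    have hp_mem : p ∈ stdSimplex ℝ (Fin (m i)) := by
      constructor
      · intro j
        rcases eq_or_ne j k₀ with rfl | h1
        · have : p j = σ i j - ε := by simp [hp, hdval, hne]
          rw [this]; linarith
        rcases eq_or_ne j l₀ with rfl | h2
        · have : p j = σ i j + ε := by simp [hp, hdval, Ne.symm hne]
          rw [this]; have := (hσ i).1 j; linarith
        · have : p j = σ i j := by simp [hp, hdval, h1, h2]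
          rw [this]; exact (hσ i).1 j
      · have : ∑ j, p j = ∑ j, σ i j - ε * ∑ j, d j := by
          simp [hp, Finset.sum_sub_distrib, Finset.mul_sum]
        rw [this, hdsum, (hσ i).2]; ring
    have hup : ∀ τ : Fin (m i) → ℝ, τ ∈ stdSimplex ℝ (Fin (m i)) →
        ∀ i', Function.update σ i τ i' ∈ stdSimplex ℝ (Fin (m i')) := by
      intro τ hτ i'
      rcases eq_or_ne i' i with rfl | h
      · simpa using hτ
      · rw [Function.update_of_ne h]; exact hσ i'
    set y := mixedPayoff u (Function.update σ i p) with hy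
    set z := mixedPayoff u (Function.update σ i q) with hz
    have hmid : (2⁻¹:ℝ) • p + (2⁻¹:ℝ) • q = σ i := by
      rw [hp, hq]; module
    have hxyz : x = (2⁻¹:ℝ) • y + (2⁻¹:ℝ) • z := by
      rw [hy, hz, ← mixedPayoff_update u σ i 2⁻¹ 2⁻¹ p q, hmid,
        Function.update_eq_self, hmx]
    have hyS : y ∈ mixedPayoff u '' {σ | ∀ i, σ i ∈ stdSimplex ℝ (Fin (m i))} :=
      ⟨Function.update σ i p, hup p hp_mem, rfl⟩
    have hzS : z ∈ mixedPayoff u '' {σ | ∀ i, σ i ∈ stdSimplex ℝ (Fin (m i))} :=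
      ⟨Function.update σ i q, hup q hq_mem, rfl⟩
    have hseg : openSegment ℝ y z ⊆
        mixedPayoff u '' {σ | ∀ i, σ i ∈ stdSimplex ℝ (Fin (m i))} := by
      rintro w ⟨ca, cb, hca, hcb, hab, rfl⟩
      exact ⟨Function.update σ i (ca • p + cb • q),
        hup _ ((convex_stdSimplex ℝ _) hp_mem hq_mem hca.le hcb.le hab),
        mixedPayoff_update u σ i ca cb p q⟩
    have hxo : x ∈ openSegment ℝ y z :=
      ⟨2⁻¹, 2⁻¹, by norm_num, by norm_num, by norm_num, hxyz.symm⟩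
    obtain ⟨-, hxz⟩ := hX y hyS z hzS hseg hxo
    refine ih (Function.update σ i q) (hup q hq_mem) ?_ hxz.symm
    -- cardinality bound
    have hsub : (Finset.univ.filter fun j => q j ≠ 0) ⊆
        (Finset.univ.filter fun j => σ i j ≠ 0).erase l₀ := by
      intro j hj
      simp only [Finset.mem_filter, Finset.mem_erase, Finset.mem_univ, true_and] at hj ⊢
      have hjl : j ≠ l₀ := by rintro rfl; exact hj hql
      refine ⟨hjl, ?_⟩
      rcases eq_or_ne j k₀ with rfl | h1
      · exact hk₀
      · rw [← hqo j h1 hjl]; exact hj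
    have hl₀mem : l₀ ∈ Finset.univ.filter fun j => σ i j ≠ 0 := by simp [hl₀]; exact hl₀
    have hcard_i : (Finset.univ.filter fun j => q j ≠ 0).card <
        (Finset.univ.filter fun j => σ i j ≠ 0).card :=
      lt_of_le_of_lt (Finset.card_le_card hsub) (Finset.card_erase_lt_of_mem hl₀mem)
    have hrw : ∀ i' ∈ Finset.univ.erase i,
        (Finset.univ.filter fun k => Function.update σ i q i' k ≠ 0).card =
          (Finset.univ.filter fun k => σ i' k ≠ 0).card := by
      intro i' hi'
      rw [Function.update_of_ne (Finset.ne_of_mem_erase hi')]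
    have h1 : ∑ i', (Finset.univ.filter fun k => Function.update σ i q i' k ≠ 0).card =
        (Finset.univ.filter fun j => q j ≠ 0).card +
          ∑ i' ∈ Finset.univ.erase i, (Finset.univ.filter fun k => σ i' k ≠ 0).card := by
      rw [← Finset.add_sum_erase _ _ (Finset.mem_univ i)]
      congr 1
      · simp
      · exact Finset.sum_congr rfl hrw
    have h2 : ∑ i', (Finset.univ.filter fun k => σ i' k ≠ 0).card =
        (Finset.univ.filter fun j => σ i j ≠ 0).card +
          ∑ i' ∈ Finset.univ.erase i, (Finset.univ.filter fun k => σ i' k ≠ 0).card :=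
      (Finset.add_sum_erase _ _ (Finset.mem_univ i)).symm
    rw [h2] at hcard
    rw [h1]
    omega


/-- `∅ ≠ ext(S_co) ⊆ ext(S_nc) ⊆ S_pu`, where `S_pu = u(∏Aᵢ)`,
`S_nc = u(∏Δ(Aᵢ))`, and `S_co = conv(S_pu)`. -/
theorem stmt8 {n : ℕ} (m : Fin n → ℕ) (hm : ∀ i, 0 < m i)
    (u : (∀ i, Fin (m i)) → (Fin n → ℝ)) :
    (∃ x, ExtremePt (convexHull ℝ (Set.range u)) x) ∧
      (∀ x, ExtremePt (convexHull ℝ (Set.range u)) x →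
        ExtremePt (mixedPayoff u '' {σ | ∀ i, σ i ∈ stdSimplex ℝ (Fin (m i))}) x) ∧
      (∀ x, ExtremePt (mixedPayoff u '' {σ | ∀ i, σ i ∈ stdSimplex ℝ (Fin (m i))}) x →
        x ∈ Set.range u) := by
  have hconv : Convex ℝ (convexHull ℝ (Set.range u)) := convex_convexHull ℝ _
  refine ⟨?_, ?_, ?_⟩
  · -- nonemptiness of extreme points of the hull
    have hne : (Set.range u).Nonempty := by
      have : ∀ i, Fin (m i) := fun i => ⟨0, hm i⟩
      exact ⟨u this, Set.mem_range_self this⟩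
    have hcomp : IsCompact (convexHull ℝ (Set.range u)) :=
      (Set.finite_range u).isCompact_convexHull (𝕜 := ℝ)
    obtain ⟨x, hx⟩ := hcomp.extremePoints_nonempty
      (hne.mono (subset_convexHull ℝ _))
    rw [mem_extremePoints] at hx
    exact ⟨x, hx.1, fun y hy z hz _ hxo =>
      ⟨(hx.2 y hy z hz hxo).1.symm, (hx.2 y hy z hz hxo).2.symm⟩⟩
  · -- ext(S_co) ⊆ ext(S_nc)
    intro x hx
    have hx' : x ∈ (convexHull ℝ (Set.range u)).extremePoints ℝ :=
      mem_extremePoints.mpr ⟨hx.1, fun y hy z hz hxo => by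
        obtain ⟨h1, h2⟩ := hx.2 y hy z hz (hconv.openSegment_subset hy hz) hxo
        exact ⟨h1.symm, h2.symm⟩⟩
    obtain ⟨a, rfl⟩ := extremePoints_convexHull_subset hx'
    refine ⟨pure_mem_S u a, fun y hy z hz _ hxo => ?_⟩
    obtain ⟨σy, hσy, rfl⟩ := hy
    obtain ⟨σz, hσz, rfl⟩ := hz
    have hyc := mixedPayoff_mem_hull u σy hσy
    have hzc := mixedPayoff_mem_hull u σz hσz
    exact hx.2 _ hyc _ hzc (hconv.openSegment_subset hyc hzc) hxo
  · -- ext(S_nc) ⊆ S_pu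
    intro x hx
    obtain ⟨σ, hσ, hmx⟩ := hx.1
    exact extremePt_aux u x hx.2 _ σ hσ le_rfl hmx
end

section
/- Let S ⊂ ℝ² be a compact set with only finitely many extreme points (in the generalized non-convex sense). Suppose (v₁ᵗ, v₂ᵗ) is a sequence in S converging to (v₁*, v₂*) ∈ S with v₁ᵗ > v₁* and v₂* > v₂ᵗ for all t, and (v₂ᵗ − v₂*)/(v₁ᵗ − v₁*) → 0 as t → ∞. Then (v₁*, v₂*) is not on the Pareto frontier of S: there exists (w₁, w₂) ∈ S distinct from (v₁*, v₂*) with w₁ ≥ v₁* and w₂ ≥ v₂*. -/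
set_option maxHeartbeats 1000000 in
lemma convex_comb_eq {a b u w m : ℝ} (ha : 0 < a) (hb : 0 < b)
    (hu : u ≤ m) (hw : w ≤ m) (h : a * u + b * w = a * m + b * m) :
    u = m ∧ w = m := by
  constructor
  · by_contra hc
    have hu' : u < m := lt_of_le_of_ne hu hc
    nlinarith [mul_lt_mul_of_pos_left hu' ha, mul_le_mul_of_nonneg_left hw hb.le]
  · by_contra hc
    have hw' : w < m := lt_of_le_of_ne hw hc
    nlinarith [mul_lt_mul_of_pos_left hw' hb, mul_le_mul_of_nonneg_left hu ha.le]

lemma lexmax_extremePt (S : Set (ℝ × ℝ)) (β c : ℝ) (q : ℝ × ℝ) (hq : q ∈ S)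
    (hq2 : q.2 < β)
    (hA : ∀ w ∈ S, w.2 ≤ β → w.2 + c * w.1 ≤ q.2 + c * q.1)
    (hB : ∀ w ∈ S, w.2 ≤ β → w.2 + c * w.1 = q.2 + c * q.1 → w.1 ≤ q.1) :
    ExtremePt S q := by
  refine ⟨hq, ?_⟩
  intro y hy z hz hsub hmem
  rcases eq_or_ne y z with rfl | hne
  · rw [openSegment_same] at hmem
    exact ⟨hmem, hmem⟩
  exfalso
  obtain ⟨a, b, ha, hb, hab, hq'⟩ := hmem
  have hq1 : a * y.1 + b * z.1 = q.1 := by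
    have := congrArg Prod.fst hq'
    simpa [smul_eq_mul] using this
  have hq2' : a * y.2 + b * z.2 = q.2 := by
    have := congrArg Prod.snd hq'
    simpa [smul_eq_mul] using this
  set D : ℝ := |y.2 - q.2| + |z.2 - q.2| + 1 with hD
  have hDpos : 0 < D := by positivity
  set δ : ℝ := min (1/2) ((β - q.2) / D) with hδ
  have hδpos : 0 < δ := lt_min (by norm_num) (div_pos (by linarith) hDpos)
  have hδle : δ * D ≤ β - q.2 := (le_div_iff₀ hDpos).mp (min_le_right _ _)
  have hδhalf : δ ≤ 1/2 := min_le_left _ _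
  set y' : ℝ × ℝ := (q.1 + δ * (y.1 - q.1), q.2 + δ * (y.2 - q.2)) with hy'
  set z' : ℝ × ℝ := (q.1 + δ * (z.1 - q.1), q.2 + δ * (z.2 - q.2)) with hz'
  have hy'mem : y' ∈ openSegment ℝ y z := by
    refine ⟨(1-δ)*a + δ, (1-δ)*b, by nlinarith, by nlinarith,
      by linear_combination (1-δ)*hab, ?_⟩
    refine Prod.ext_iff.mpr ⟨?_, ?_⟩ <;>
      simp only [hy', Prod.fst_add, Prod.smul_fst, Prod.snd_add, Prod.smul_snd, smul_eq_mul]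
    · linear_combination (1-δ) * hq1
    · linear_combination (1-δ) * hq2'
  have hz'mem : z' ∈ openSegment ℝ y z := by
    refine ⟨(1-δ)*a, (1-δ)*b + δ, by nlinarith, by nlinarith,
      by linear_combination (1-δ)*hab, ?_⟩
    refine Prod.ext_iff.mpr ⟨?_, ?_⟩ <;>
      simp only [hz', Prod.fst_add, Prod.smul_fst, Prod.snd_add, Prod.smul_snd, smul_eq_mul]
    · linear_combination (1-δ) * hq1
    · linear_combination (1-δ) * hq2'
  have hy'S : y' ∈ S := hsub hy'mem
  have hz'S : z' ∈ S := hsub hz'mem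
  have habsy := le_abs_self (y.2 - q.2)
  have habsz := le_abs_self (z.2 - q.2)
  have habsy' := abs_nonneg (y.2 - q.2)
  have habsz' := abs_nonneg (z.2 - q.2)
  have hy'β : y'.2 ≤ β := by
    simp only [hy']
    nlinarith
  have hz'β : z'.2 ≤ β := by
    simp only [hz']
    nlinarith
  have hAy := hA y' hy'S hy'β
  have hAz := hA z' hz'S hz'β
  have hy'c1 : y'.1 = q.1 + δ * (y.1 - q.1) := by rw [hy']
  have hy'c2 : y'.2 = q.2 + δ * (y.2 - q.2) := by rw [hy']
  have hz'c1 : z'.1 = q.1 + δ * (z.1 - q.1) := by rw [hz']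
  have hz'c2 : z'.2 = q.2 + δ * (z.2 - q.2) := by rw [hz']
  have hcomb : a * (y'.2 + c * y'.1) + b * (z'.2 + c * z'.1) = q.2 + c * q.1 := by
    rw [hy'c1, hy'c2, hz'c1, hz'c2]
    linear_combination (δ + c * δ * 0) * hq2' + δ * hq2' - δ * hq2' + δ * hq2' + c * δ * hq1 + (q.2 + c*q.1 - δ*q.2 - c*δ*q.1) * hab - δ * hq2'
  have hfyz := convex_comb_eq ha hb hAy hAz (by linear_combination hcomb - (q.2 + c*q.1) * hab)
  have hfy : y'.2 + c * y'.1 = q.2 + c * q.1 := hfyz.1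
  have hfz : z'.2 + c * z'.1 = q.2 + c * q.1 := hfyz.2
  have hBy := hB y' hy'S hy'β hfy
  have hBz := hB z' hz'S hz'β hfz
  have hcomb1 : a * y'.1 + b * z'.1 = q.1 := by
    rw [hy'c1, hz'c1]
    linear_combination δ * hq1 + (q.1 - δ*q.1) * hab
  have h1q := convex_comb_eq ha hb hBy hBz (by linear_combination hcomb1 - q.1 * hab)
  have hy1q : y'.1 = q.1 := h1q.1
  have hz1q : z'.1 = q.1 := h1q.2
  have hy2q : y'.2 = q.2 := by
    have := hfy; rw [hy1q] at this; linarith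
  have hz2q : z'.2 = q.2 := by
    have := hfz; rw [hz1q] at this; linarith
  apply hne
  refine Prod.ext_iff.mpr ⟨?_, ?_⟩
  · have h1 : δ * (y.1 - q.1) = δ * (z.1 - q.1) := by
      have := hy1q; have := hz1q; rw [hy'c1] at hy1q; rw [hz'c1] at hz1q; linarith
    have := mul_left_cancel₀ (ne_of_gt hδpos) h1
    linarith
  · have h1 : δ * (y.2 - q.2) = δ * (z.2 - q.2) := by
      rw [hy'c2] at hy2q; rw [hz'c2] at hz2q; linarith
    have := mul_left_cancel₀ (ne_of_gt hδpos) h1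
    linarith
/-- If a compact set `S ⊆ ℝ²` with finitely many extreme points
contains a sequence converging to `v⋆ ∈ S` from the lower-right with slopes tending
to `0`, then `v⋆` is Pareto dominated within `S`. -/
theorem stmt13 (S : Set (ℝ × ℝ)) (hS : IsCompact S)
    (hfin : {x | ExtremePt S x}.Finite)
    (v : ℕ → ℝ × ℝ) (hv : ∀ t, v t ∈ S)
    (vstar : ℝ × ℝ) (hvstar : vstar ∈ S)
    (hlim : Filter.Tendsto v Filter.atTop (nhds vstar))
    (h1 : ∀ t, vstar.1 < (v t).1) (h2 : ∀ t, (v t).2 < vstar.2)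
    (hslope : Filter.Tendsto (fun t => ((v t).2 - vstar.2) / ((v t).1 - vstar.1))
      Filter.atTop (nhds 0)) :
    ∃ w ∈ S, w ≠ vstar ∧ vstar.1 ≤ w.1 ∧ vstar.2 ≤ w.2 := by
  by_contra hcon
  have hdom : ∀ w ∈ S, vstar.1 ≤ w.1 → vstar.2 ≤ w.2 → w = vstar := by
    intro w hw hw1 hw2
    by_contra hne
    exact hcon ⟨w, hw, hne, hw1, hw2⟩
  set ρ : ℕ → ℝ := fun t => (vstar.2 - (v t).2) / ((v t).1 - vstar.1) with hρ
  have hρpos : ∀ t, 0 < ρ t := fun t =>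
    div_pos (by linarith [h2 t]) (by linarith [h1 t])
  have hρlim : Filter.Tendsto ρ Filter.atTop (nhds 0) := by
    have h : ρ = fun t => -(((v t).2 - vstar.2) / ((v t).1 - vstar.1)) := by
      funext t
      show (vstar.2 - (v t).2) / ((v t).1 - vstar.1) = -(((v t).2 - vstar.2) / ((v t).1 - vstar.1))
      rw [← neg_div]
      ring_nf
    rw [h]
    simpa using hslope.neg
  have hρmul : ∀ t, vstar.2 - (v t).2 = ρ t * ((v t).1 - vstar.1) := by
    intro t
    have hne : (v t).1 - vstar.1 ≠ 0 := ne_of_gt (by linarith [h1 t])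
    rw [hρ]
    exact (div_mul_cancel₀ _ hne).symm
  have key : ∀ t, ∃ q : ℝ × ℝ, ExtremePt S q ∧ q.2 < vstar.2 ∧
      (v t).2 + (2 * ρ t) * (v t).1 ≤ q.2 + (2 * ρ t) * q.1 := by
    intro t
    set c : ℝ := 2 * ρ t with hc
    have hcpos : 0 < c := by have := hρpos t; rw [hc]; linarith
    set T : Set (ℝ × ℝ) := S ∩ {w | w.2 ≤ vstar.2} with hT
    have hTc : IsCompact T := hS.inter_right (isClosed_le continuous_snd continuous_const)
    have hTne : T.Nonempty := ⟨v t, hv t, le_of_lt (h2 t)⟩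
    have hfcont : Continuous fun w : ℝ × ℝ => w.2 + c * w.1 :=
      continuous_snd.add (continuous_const.mul continuous_fst)
    obtain ⟨m, hmT, hmmax⟩ := hTc.exists_isMaxOn hTne hfcont.continuousOn
    set F : Set (ℝ × ℝ) := T ∩ {w | w.2 + c * w.1 = m.2 + c * m.1} with hF
    have hFc : IsCompact F := hTc.inter_right (isClosed_eq hfcont continuous_const)
    obtain ⟨q, hqF, hqmax⟩ := hFc.exists_isMaxOn ⟨m, hmT, rfl⟩ continuous_fst.continuousOn
    have hqS : q ∈ S := hqF.1.1
    have hqβ : q.2 ≤ vstar.2 := hqF.1.2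
    have hqval : q.2 + c * q.1 = m.2 + c * m.1 := hqF.2
    have hAq : ∀ w ∈ S, w.2 ≤ vstar.2 → w.2 + c * w.1 ≤ q.2 + c * q.1 := by
      intro w hw hwβ
      rw [hqval]
      exact hmmax ⟨hw, hwβ⟩
    have hBq : ∀ w ∈ S, w.2 ≤ vstar.2 → w.2 + c * w.1 = q.2 + c * q.1 → w.1 ≤ q.1 := by
      intro w hw hwβ hweq
      exact hqmax ⟨⟨hw, hwβ⟩, by rw [← hqval]; exact hweq⟩
    have hvineq : (v t).2 + c * (v t).1 ≤ q.2 + c * q.1 :=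
      hAq (v t) (hv t) (le_of_lt (h2 t))
    have hvval : vstar.2 + c * vstar.1 < (v t).2 + c * (v t).1 := by
      have h := hρmul t
      have hx := h1 t
      have hr := hρpos t
      rw [hc]
      nlinarith
    have hq2 : q.2 < vstar.2 := by
      rcases lt_or_eq_of_le hqβ with h | h
      · exact h
      · exfalso
        have hq1 : vstar.1 < q.1 := by nlinarith
        have heq := hdom q hqS (le_of_lt hq1) (le_of_eq h.symm)
        rw [heq] at hq1
        exact lt_irrefl _ hq1
    exact ⟨q, lexmax_extremePt S vstar.2 c q hqS hq2 hAq hBq, hq2, hvineq⟩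
  choose Q hQext hQ2 hQval using key
  have hQmem : ∀ t, Q t ∈ hfin.toFinset := by
    intro t
    rw [Set.Finite.mem_toFinset]
    exact hQext t
  obtain ⟨e, he'⟩ := Finite.exists_infinite_fiber
    (fun t => (⟨Q t, hQmem t⟩ : {x // x ∈ hfin.toFinset}))
  have he : ((fun t => (⟨Q t, hQmem t⟩ : {x // x ∈ hfin.toFinset})) ⁻¹' {e}).Infinite :=
    Set.infinite_coe_iff.mp he'
  have heQ : ∀ t, t ∈ (fun t => (⟨Q t, hQmem t⟩ : {x // x ∈ hfin.toFinset})) ⁻¹' {e} →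
      Q t = (e : ℝ × ℝ) := by
    intro t ht
    exact congrArg Subtype.val (ht : _ = e)
  obtain ⟨t0, ht0, -⟩ := he.exists_gt 0
  have he2 : (e : ℝ × ℝ).2 < vstar.2 := by
    rw [← heQ t0 ht0]
    exact hQ2 t0
  set ε : ℝ := vstar.2 - (e : ℝ × ℝ).2 with hε
  have hεpos : 0 < ε := by rw [hε]; linarith
  set B : ℝ := |(e : ℝ × ℝ).1 - vstar.1| + 1 with hB
  have hBpos : 0 < B := by
    have := abs_nonneg ((e : ℝ × ℝ).1 - vstar.1)
    rw [hB]; linarith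
  have hev : ∀ᶠ t in Filter.atTop, ρ t < ε / (2 * B) :=
    hρlim.eventually (gt_mem_nhds (div_pos hεpos (by linarith)))
  obtain ⟨T, hT⟩ := Filter.eventually_atTop.mp hev
  obtain ⟨t, htfib, htT⟩ := he.exists_gt T
  have hρsmall : ρ t < ε / (2 * B) := hT t (le_of_lt htT)
  have hQe := heQ t htfib
  have hval := hQval t
  rw [hQe] at hval
  have hvval : vstar.2 + (2 * ρ t) * vstar.1 < (v t).2 + (2 * ρ t) * (v t).1 := by
    have h := hρmul t
    have hx := h1 t
    have hr := hρpos t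
    nlinarith
  have habs : (e : ℝ × ℝ).1 - vstar.1 ≤ B - 1 := by
    rw [hB]
    have := le_abs_self ((e : ℝ × ℝ).1 - vstar.1)
    linarith
  have hr := hρpos t
  have h2ρB : 2 * ρ t * B < ε := by
    have h' := (lt_div_iff₀ (by linarith : (0:ℝ) < 2 * B)).mp hρsmall
    linarith
  nlinarith [hval, hvval, habs, hr, h2ρB, hBpos, he2, hεpos]
end

section
/- Let S ⊂ ℝ² be compact such that every extreme point of S (generalized non-convex sense) belongs to a given dense subset D ⊆ S. Then the Pareto frontier of D is contained in the Pareto frontier of S: if v ∈ D is not Pareto dominated by any point of D, then v is not Pareto dominated by any point of S. -/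
private lemma seg_mem {S : Set (ℝ × ℝ)} {y z m : ℝ × ℝ} {a b : ℝ}
    (ha : 0 < a) (hb : 0 < b) (hab : a + b = 1)
    (heq : a • y + b • z = m)
    (hsub : openSegment ℝ y z ⊆ S) :
    ∀ t : ℝ, -b < t → t < a → m + t • (z - y) ∈ S := by
  intro t ht1 ht2
  apply hsub
  refine ⟨a - t, b + t, by linarith, by linarith, by linarith, ?_⟩
  rw [← heq]
  module

private lemma aux1 (S D : Set (ℝ × ℝ)) (hS : IsCompact S)
    (hext : ∀ x, ExtremePt S x → x ∈ D) (v : ℝ × ℝ)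
    (hPD : ∀ w ∈ D, v.1 ≤ w.1 → v.2 ≤ w.2 → w = v)
    (hnostrict : ∀ u ∈ S, ¬(v.1 < u.1 ∧ v.2 < u.2))
    (w : ℝ × ℝ) (hw : w ∈ S) (hw1 : v.1 < w.1) (hw2 : v.2 ≤ w.2) : False := by
  set T : Set (ℝ × ℝ) := S ∩ {u | v.1 ≤ u.1 ∧ v.2 ≤ u.2} with hTdef
  have hTc : IsCompact T := hS.inter_right
    ((isClosed_le continuous_const continuous_fst).inter
      (isClosed_le continuous_const continuous_snd))
  have hwT : w ∈ T := ⟨hw, le_of_lt hw1, hw2⟩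
  obtain ⟨m, hmT, hmax⟩ := hTc.exists_isMaxOn ⟨w, hwT⟩ continuous_fst.continuousOn
  obtain ⟨hmS, hm1, hm2⟩ := hmT
  have hmax' : ∀ u ∈ T, u.1 ≤ m.1 := hmax
  have hm1' : v.1 < m.1 := lt_of_lt_of_le hw1 (hmax' w hwT)
  have hm2' : m.2 = v.2 := by
    rcases eq_or_lt_of_le hm2 with h | h
    · exact h.symm
    · exact absurd ⟨hm1', h⟩ (hnostrict m hmS)
  have hex : ExtremePt S m := by
    refine ⟨hmS, ?_⟩
    intro y hy z hz hsub hm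
    obtain ⟨a, b, ha, hb, hab, heq⟩ := hm
    have hyz : y = z := by
      by_contra hyz
      have hd : z - y ≠ 0 := sub_ne_zero.mpr (Ne.symm hyz)
      have hseg := seg_mem ha hb hab heq hsub
      have hco : ∀ t : ℝ, (m + t • (z - y)).1 = m.1 + t * (z - y).1 ∧
          (m + t • (z - y)).2 = m.2 + t * (z - y).2 := by
        intro t; constructor <;> simp
      by_cases hd2 : (z - y).2 = 0
      · have hd1 : (z - y).1 ≠ 0 := by
          intro h1; exact hd (Prod.ext h1 hd2)
        set t : ℝ := (if 0 < (z - y).1 then 1 else -1) * (min a b / 2) with htdef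
        have hmab : 0 < min a b / 2 := by positivity
        have habs : -b < t ∧ t < a := by
          have h1 : min a b / 2 < a := lt_of_lt_of_le (by linarith [min_le_left a b]) le_rfl
          have h2 : min a b / 2 < b := by
            have := min_le_right a b; linarith
          have h1' : min a b / 2 < a := by
            have := min_le_left a b; linarith
          constructor <;> (rw [htdef]; split <;> nlinarith)
        have htd1 : 0 < t * (z - y).1 := by
          rw [htdef]
          rcases lt_trichotomy 0 ((z - y).1) with h | h | h
          · rw [if_pos h]; nlinarith
          · exact absurd h.symm hd1
          · rw [if_neg (by linarith)]; nlinarith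
        have hp := hseg t habs.1 habs.2
        have hpT : m + t • (z - y) ∈ T := by
          refine ⟨hp, ?_, ?_⟩
          · rw [(hco t).1]; linarith
          · rw [(hco t).2, hd2]; simp; linarith [hm2]
        have := hmax' _ hpT
        rw [(hco t).1] at this
        linarith
      · set s : ℝ := if 0 < (z - y).2 then 1 else -1 with hsdef
        set δ : ℝ := min (min a b) ((m.1 - v.1) / (|(z - y).1| + 1)) / 2 with hδdef
        have habs1 : (0:ℝ) < |(z - y).1| + 1 := by positivity
        have hδ : 0 < δ := by
          rw [hδdef]
          have h1 : 0 < min a b := lt_min ha hb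
          have h2 : 0 < (m.1 - v.1) / (|(z - y).1| + 1) := by
            apply div_pos <;> linarith
          positivity
        set t : ℝ := s * δ with htdef
        have hts : |t| = δ := by
          rw [htdef, abs_mul, hsdef]
          split <;> simp [abs_of_pos hδ]
        have habs : -b < t ∧ t < a := by
          have h1 : δ < min a b := by
            rw [hδdef]
            have h2 := min_le_left (min a b) ((m.1 - v.1) / (|(z - y).1| + 1))
            have h3 : 0 < min a b := lt_min ha hb
            linarith
          have h2 := abs_lt.mp (lt_of_le_of_lt (le_of_eq hts) h1)
          have h3 := min_le_left a b
          have h4 := min_le_right a b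
          constructor <;> linarith
        have htd2 : 0 < t * (z - y).2 := by
          rw [htdef, hsdef]
          rcases lt_trichotomy 0 ((z - y).2) with h | h | h
          · rw [if_pos h]; nlinarith
          · exact absurd h.symm hd2
          · rw [if_neg (by linarith)]; nlinarith
        have htd1 : |t * (z - y).1| < m.1 - v.1 := by
          rw [abs_mul, hts]
          have hδle : δ ≤ (m.1 - v.1) / (|(z - y).1| + 1) / 2 := by
            rw [hδdef]
            have := min_le_right (min a b) ((m.1 - v.1) / (|(z - y).1| + 1))
            linarith
          have h0 : 0 ≤ |(z - y).1| := abs_nonneg _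
          calc δ * |(z - y).1| ≤ (m.1 - v.1) / (|(z - y).1| + 1) / 2 * |(z - y).1| := by
                apply mul_le_mul_of_nonneg_right hδle h0
            _ < m.1 - v.1 := by
                rw [div_div, div_mul_eq_mul_div, div_lt_iff₀ (by positivity)]
                nlinarith
        have hp := hseg t habs.1 habs.2
        refine hnostrict _ hp ⟨?_, ?_⟩
        · rw [(hco t).1]
          have := abs_lt.mp htd1
          linarith
        · rw [(hco t).2, hm2']; linarith
    subst hyz
    have hmy : m = y := by
      rw [← heq, ← add_smul, hab, one_smul]
    exact ⟨hmy, hmy⟩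
  have hmD := hext m hex
  have heq := hPD m hmD (le_of_lt hm1') (le_of_eq hm2'.symm)
  rw [heq] at hm1'
  exact lt_irrefl _ hm1'

private lemma aux2 (S D : Set (ℝ × ℝ)) (hS : IsCompact S)
    (hext : ∀ x, ExtremePt S x → x ∈ D) (v : ℝ × ℝ)
    (hPD : ∀ w ∈ D, v.1 ≤ w.1 → v.2 ≤ w.2 → w = v)
    (hnostrict : ∀ u ∈ S, ¬(v.1 < u.1 ∧ v.2 < u.2))
    (w : ℝ × ℝ) (hw : w ∈ S) (hw2 : v.2 < w.2) (hw1 : v.1 ≤ w.1) : False := by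
  set T : Set (ℝ × ℝ) := S ∩ {u | v.1 ≤ u.1 ∧ v.2 ≤ u.2} with hTdef
  have hTc : IsCompact T := hS.inter_right
    ((isClosed_le continuous_const continuous_fst).inter
      (isClosed_le continuous_const continuous_snd))
  have hwT : w ∈ T := ⟨hw, hw1, le_of_lt hw2⟩
  obtain ⟨m, hmT, hmax⟩ := hTc.exists_isMaxOn ⟨w, hwT⟩ continuous_snd.continuousOn
  obtain ⟨hmS, hm1, hm2⟩ := hmT
  have hmax' : ∀ u ∈ T, u.2 ≤ m.2 := hmax
  have hm2' : v.2 < m.2 := lt_of_lt_of_le hw2 (hmax' w hwT)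
  have hm1' : m.1 = v.1 := by
    rcases eq_or_lt_of_le hm1 with h | h
    · exact h.symm
    · exact absurd ⟨h, hm2'⟩ (hnostrict m hmS)
  have hex : ExtremePt S m := by
    refine ⟨hmS, ?_⟩
    intro y hy z hz hsub hm
    obtain ⟨a, b, ha, hb, hab, heq⟩ := hm
    have hyz : y = z := by
      by_contra hyz
      have hd : z - y ≠ 0 := sub_ne_zero.mpr (Ne.symm hyz)
      have hseg := seg_mem ha hb hab heq hsub
      have hco : ∀ t : ℝ, (m + t • (z - y)).1 = m.1 + t * (z - y).1 ∧
          (m + t • (z - y)).2 = m.2 + t * (z - y).2 := by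
        intro t; constructor <;> simp
      by_cases hd1 : (z - y).1 = 0
      · have hd2 : (z - y).2 ≠ 0 := by
          intro h2; exact hd (Prod.ext hd1 h2)
        set t : ℝ := (if 0 < (z - y).2 then 1 else -1) * (min a b / 2) with htdef
        have hmab : 0 < min a b / 2 := by positivity
        have habs : -b < t ∧ t < a := by
          have h1' : min a b / 2 < a := by
            have := min_le_left a b; linarith
          have h2 : min a b / 2 < b := by
            have := min_le_right a b; linarith
          constructor <;> (rw [htdef]; split <;> nlinarith)
        have htd2 : 0 < t * (z - y).2 := by
          rw [htdef]
          rcases lt_trichotomy 0 ((z - y).2) with h | h | h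
          · rw [if_pos h]; nlinarith
          · exact absurd h.symm hd2
          · rw [if_neg (by linarith)]; nlinarith
        have hp := hseg t habs.1 habs.2
        have hpT : m + t • (z - y) ∈ T := by
          refine ⟨hp, ?_, ?_⟩
          · rw [(hco t).1, hd1]; simp; linarith [hm1]
          · rw [(hco t).2]; linarith
        have := hmax' _ hpT
        rw [(hco t).2] at this
        linarith
      · set s : ℝ := if 0 < (z - y).1 then 1 else -1 with hsdef
        set δ : ℝ := min (min a b) ((m.2 - v.2) / (|(z - y).2| + 1)) / 2 with hδdef
        have habs2 : (0:ℝ) < |(z - y).2| + 1 := by positivity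
        have hδ : 0 < δ := by
          rw [hδdef]
          have h1 : 0 < min a b := lt_min ha hb
          have h2 : 0 < (m.2 - v.2) / (|(z - y).2| + 1) := by
            apply div_pos <;> linarith
          positivity
        set t : ℝ := s * δ with htdef
        have hts : |t| = δ := by
          rw [htdef, abs_mul, hsdef]
          split <;> simp [abs_of_pos hδ]
        have habs : -b < t ∧ t < a := by
          have h1 : δ < min a b := by
            rw [hδdef]
            have h2 := min_le_left (min a b) ((m.2 - v.2) / (|(z - y).2| + 1))
            have h3 : 0 < min a b := lt_min ha hb
            linarith
          have h2 := abs_lt.mp (lt_of_le_of_lt (le_of_eq hts) h1)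
          have h3 := min_le_left a b
          have h4 := min_le_right a b
          constructor <;> linarith
        have htd1 : 0 < t * (z - y).1 := by
          rw [htdef, hsdef]
          rcases lt_trichotomy 0 ((z - y).1) with h | h | h
          · rw [if_pos h]; nlinarith
          · exact absurd h.symm hd1
          · rw [if_neg (by linarith)]; nlinarith
        have htd2 : |t * (z - y).2| < m.2 - v.2 := by
          rw [abs_mul, hts]
          have hδle : δ ≤ (m.2 - v.2) / (|(z - y).2| + 1) / 2 := by
            rw [hδdef]
            have := min_le_right (min a b) ((m.2 - v.2) / (|(z - y).2| + 1))
            linarith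
          have h0 : 0 ≤ |(z - y).2| := abs_nonneg _
          calc δ * |(z - y).2| ≤ (m.2 - v.2) / (|(z - y).2| + 1) / 2 * |(z - y).2| := by
                apply mul_le_mul_of_nonneg_right hδle h0
            _ < m.2 - v.2 := by
                rw [div_div, div_mul_eq_mul_div, div_lt_iff₀ (by positivity)]
                nlinarith
        have hp := hseg t habs.1 habs.2
        refine hnostrict _ hp ⟨?_, ?_⟩
        · rw [(hco t).1, hm1']; linarith
        · rw [(hco t).2]
          have := abs_lt.mp htd2
          linarith
    subst hyz
    have hmy : m = y := by
      rw [← heq, ← add_smul, hab, one_smul]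
    exact ⟨hmy, hmy⟩
  have hmD := hext m hex
  have heq := hPD m hmD (le_of_eq hm1'.symm) (le_of_lt hm2')
  rw [heq] at hm2'
  exact lt_irrefl _ hm2'

/-- If `S ⊆ ℝ²` is compact, `D ⊆ S` is dense in `S`, and every extreme
point of `S` lies in `D`, then a point of `D` not Pareto dominated within `D` is not
Pareto dominated within `S`. -/
theorem stmt14 (S D : Set (ℝ × ℝ)) (hS : IsCompact S) (hDS : D ⊆ S)
    (hdense : S ⊆ closure D)
    (hext : ∀ x, ExtremePt S x → x ∈ D)
    (v : ℝ × ℝ) (hv : v ∈ D)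
    (hPD : ∀ w ∈ D, v.1 ≤ w.1 → v.2 ≤ w.2 → w = v) :
    ∀ w ∈ S, v.1 ≤ w.1 → v.2 ≤ w.2 → w = v := by
  intro w hw h1 h2
  by_contra hne
  have hnostrict : ∀ u ∈ S, ¬(v.1 < u.1 ∧ v.2 < u.2) := by
    rintro u hu ⟨hu1, hu2⟩
    have hc := hdense hu
    rw [Metric.mem_closure_iff] at hc
    obtain ⟨u', hu', hdist⟩ := hc (min (u.1 - v.1) (u.2 - v.2))
      (lt_min (by linarith) (by linarith))
    have hd1 : dist u.1 u'.1 ≤ dist u u' := by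
      rw [Prod.dist_eq]; exact le_max_left _ _
    have hd2 : dist u.2 u'.2 ≤ dist u u' := by
      rw [Prod.dist_eq]; exact le_max_right _ _
    have h1' : v.1 < u'.1 := by
      have := abs_lt.mp (lt_of_le_of_lt (Real.dist_eq u.1 u'.1 ▸ hd1)
        (lt_of_lt_of_le hdist (min_le_left _ _)))
      linarith [this.1, this.2]
    have h2' : v.2 < u'.2 := by
      have := abs_lt.mp (lt_of_le_of_lt (Real.dist_eq u.2 u'.2 ▸ hd2)
        (lt_of_lt_of_le hdist (min_le_right _ _)))
      linarith [this.1, this.2]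
    have heq := hPD u' hu' (le_of_lt h1') (le_of_lt h2')
    rw [heq] at h1'
    exact lt_irrefl _ h1'
  rcases eq_or_lt_of_le h1 with he1 | hl1
  · rcases eq_or_lt_of_le h2 with he2 | hl2
    · exact hne (Prod.ext he1.symm he2.symm)
    · exact aux2 S D hS hext v hPD hnostrict w hw hl2 h1
  · exact aux1 S D hS hext v hPD hnostrict w hw hl1 h2
end

section
/- For a two-player finite strategic game, let R_nc denote the set of payoff pairs achievable by rational mixed-strategy profiles (all probabilities rational). Then P(R_nc) ⊆ P(S_nc): every payoff pair in R_nc that is not Pareto dominated within R_nc is also not Pareto dominated within S_nc. -/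
open Finset Filter Topology
open scoped Classical
set_option linter.unusedSectionVars false
set_option maxHeartbeats 1000000

section Helpers
variable {A A₁ A₂ : Type*} [Fintype A] [Fintype A₁] [Fintype A₂]

noncomputable def Bl (φ : A₁ → A₂ → ℝ) (x : A₁ → ℝ) (y : A₂ → ℝ) : ℝ :=
  ∑ a : A₁, ∑ b : A₂, x a * y b * φ a b

noncomputable def rowB (φ : A₁ → A₂ → ℝ) (a : A₁) (y : A₂ → ℝ) : ℝ := ∑ b : A₂, y b * φ a b
noncomputable def colB (φ : A₁ → A₂ → ℝ) (x : A₁ → ℝ) (b : A₂) : ℝ := ∑ a : A₁, x a * φ a b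

noncomputable def pt {A : Type*} (x : A → ℝ) (a : A) (t : ℝ) : A → ℝ :=
  fun a' => (1 - t) * x a' + t * (if a' = a then 1 else 0)

lemma Bl_eq_row (φ : A₁ → A₂ → ℝ) (x y) : Bl φ x y = ∑ a : A₁, x a * rowB φ a y := by
  simp [Bl, rowB, Finset.mul_sum, mul_assoc]

lemma Bl_eq_col (φ : A₁ → A₂ → ℝ) (x y) : Bl φ x y = ∑ b : A₂, y b * colB φ x b := by
  rw [Bl, Finset.sum_comm]
  refine Finset.sum_congr rfl fun b _ => ?_
  rw [colB, Finset.mul_sum]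
  exact Finset.sum_congr rfl fun a _ => by ring

lemma Bl_add_left (φ : A₁ → A₂ → ℝ) (x x' y) :
    Bl φ (fun a => x a + x' a) y = Bl φ x y + Bl φ x' y := by
  simp [Bl, add_mul, Finset.sum_add_distrib]

lemma Bl_smul_left (φ : A₁ → A₂ → ℝ) (r : ℝ) (x y) :
    Bl φ (fun a => r * x a) y = r * Bl φ x y := by
  simp [Bl, Finset.mul_sum, mul_assoc]

lemma Bl_add_right (φ : A₁ → A₂ → ℝ) (x y y') :
    Bl φ x (fun b => y b + y' b) = Bl φ x y + Bl φ x y' := by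
  simp [Bl, mul_add, add_mul, Finset.sum_add_distrib]

lemma Bl_smul_right (φ : A₁ → A₂ → ℝ) (r : ℝ) (x y) :
    Bl φ x (fun b => r * y b) = r * Bl φ x y := by
  simp only [Bl, Finset.mul_sum]
  refine Finset.sum_congr rfl fun a _ => Finset.sum_congr rfl fun b _ => by ring

lemma Bl_single_left (φ : A₁ → A₂ → ℝ) (a : A₁) (y) :
    Bl φ (fun a' => if a' = a then (1:ℝ) else 0) y = rowB φ a y := by
  simp [Bl, rowB, ite_mul]

lemma Bl_single_right (φ : A₁ → A₂ → ℝ) (x) (b : A₂) :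
    Bl φ x (fun b' => if b' = b then (1:ℝ) else 0) = colB φ x b := by
  rw [Bl, Finset.sum_comm]
  simp [colB, ite_mul, mul_ite, Finset.sum_ite_eq']

lemma Bl_pt_left (φ : A₁ → A₂ → ℝ) (x y) (a : A₁) (t : ℝ) :
    Bl φ (pt x a t) y = (1-t) * Bl φ x y + t * rowB φ a y := by
  show Bl φ (fun a' => (1-t) * x a' + t * _) y = _
  rw [Bl_add_left, Bl_smul_left, Bl_smul_left, Bl_single_left]

lemma Bl_pt_right (φ : A₁ → A₂ → ℝ) (x y) (b : A₂) (s : ℝ) :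
    Bl φ x (pt y b s) = (1-s) * Bl φ x y + s * colB φ x b := by
  show Bl φ x (fun b' => (1-s) * y b' + s * _) = _
  rw [Bl_add_right, Bl_smul_right, Bl_smul_right, Bl_single_right]

lemma rowB_pt (φ : A₁ → A₂ → ℝ) (a : A₁) (y) (b : A₂) (s : ℝ) :
    rowB φ a (pt y b s) = (1-s) * rowB φ a y + s * φ a b := by
  simp only [rowB, pt, add_mul, Finset.sum_add_distrib, ite_mul, one_mul, zero_mul]
  simp [Finset.mul_sum, mul_assoc, mul_ite]

lemma Bl_pt_pt (φ : A₁ → A₂ → ℝ) (x y) (a : A₁) (b : A₂) (t s : ℝ) :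
    Bl φ (pt x a t) (pt y b s) = (1-t)*((1-s)*Bl φ x y + s*(colB φ x b))
      + t*((1-s)*(rowB φ a y) + s*(φ a b)) := by
  rw [Bl_pt_left, Bl_pt_right, rowB_pt]

lemma Bl_const (k : ℝ) {x : A₁ → ℝ} {y : A₂ → ℝ} (hx : ∑ a, x a = 1) (hy : ∑ b, y b = 1) :
    Bl (fun _ _ => k) x y = k := by
  rw [Bl_eq_row]
  have h : ∀ a : A₁, rowB (fun _ _ => (k:ℝ)) a y = k := by
    intro a; rw [rowB, ← Finset.sum_mul, hy, one_mul]
  simp only [h, ← Finset.sum_mul, hx, one_mul]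

lemma Bl_tendsto (φ : A₁ → A₂ → ℝ) {x : A₁ → ℝ} {y : A₂ → ℝ} {ρ₁ : ℕ → A₁ → ℝ}
    {ρ₂ : ℕ → A₂ → ℝ} (h₁ : ∀ a, Tendsto (fun n => ρ₁ n a) atTop (𝓝 (x a)))
    (h₂ : ∀ b, Tendsto (fun n => ρ₂ n b) atTop (𝓝 (y b))) :
    Tendsto (fun n => Bl φ (ρ₁ n) (ρ₂ n)) atTop (𝓝 (Bl φ x y)) := by
  apply tendsto_finset_sum
  intro a _
  apply tendsto_finset_sum
  intro b _
  exact ((h₁ a).mul (h₂ b)).mul_const _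

lemma tendsto_combo (C1 C2 C3 C4 : ℝ) {u s : ℕ → ℝ} (hu : Tendsto u atTop (𝓝 0))
    (hs : Tendsto s atTop (𝓝 0)) :
    Tendsto (fun n => (1 - u n)*((1 - s n)*C1 + s n*C2) + u n*((1 - s n)*C3 + s n*C4))
      atTop (𝓝 C1) := by
  have h := (((tendsto_const_nhds (x := (1:ℝ)) (f := atTop (α := ℕ))).sub hu).mul
      ((((tendsto_const_nhds (x := (1:ℝ))).sub hs).mul (tendsto_const_nhds (x := C1))).add
        (hs.mul (tendsto_const_nhds (x := C2))))).add
    (hu.mul ((((tendsto_const_nhds (x := (1:ℝ))).sub hs).mul (tendsto_const_nhds (x := C3))).add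
      (hs.mul (tendsto_const_nhds (x := C4)))))
  simpa using h

lemma pt_mem (x : A → ℝ) (hx : x ∈ stdSimplex ℝ A) (a : A) (t : ℝ)
    (h1 : -x a ≤ t) (h2 : t ≤ 1) : pt x a t ∈ stdSimplex ℝ A := by
  obtain ⟨hx0, hx1⟩ := hx
  constructor
  · intro a'
    by_cases h : a' = a
    · subst h
      simp only [pt, if_pos rfl, mul_one, eq_self_iff_true, if_true]
      rcases le_or_gt 0 t with ht | ht
      · nlinarith [hx0 a']
      · nlinarith [hx0 a', mul_nonneg (le_of_lt (neg_pos.2 ht)) (hx0 a')]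
    · simp only [pt, if_neg h, mul_zero, add_zero]
      nlinarith [hx0 a']
  · simp only [pt, Finset.sum_add_distrib, ← Finset.mul_sum, hx1]
    rw [Finset.sum_ite_eq' Finset.univ a (fun _ => (1:ℝ))]
    simp

lemma exists_rat_approx (x : A → ℝ) (hx : x ∈ stdSimplex ℝ A) :
    ∃ ρ : ℕ → A → ℝ, (∀ n, ρ n ∈ stdSimplex ℝ A) ∧ (∀ n a, ∃ q : ℚ, ρ n a = (q:ℝ)) ∧
      (∀ n a, x a = 0 → ρ n a = 0) ∧ (∀ a, Tendsto (fun n => ρ n a) atTop (𝓝 (x a))) := by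
  obtain ⟨hx0, hx1⟩ := hx
  have hne : ∃ a₀, 0 < x a₀ := by
    by_contra h
    push_neg at h
    have : ∑ a, x a = 0 := Finset.sum_eq_zero fun a _ => le_antisymm (h a) (hx0 a)
    rw [hx1] at this; norm_num at this
  obtain ⟨a₀, ha₀⟩ := hne
  set q : ℕ → A → ℝ := fun n a => (⌊x a * (n+1)⌋ : ℝ) / (n+1) with hq
  have hq0 : ∀ n a, 0 ≤ q n a := by
    intro n a
    apply div_nonneg _ (by positivity)
    exact_mod_cast Int.floor_nonneg.2 (mul_nonneg (hx0 a) (by positivity))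
  have hqle : ∀ n a, q n a ≤ x a := by
    intro n a
    rw [hq]
    rw [div_le_iff₀ (by positivity)]
    exact Int.floor_le _
  have hqlb : ∀ n a, x a - 1/(n+1) ≤ q n a := by
    intro n a
    rw [hq, sub_le_iff_le_add, ← add_div, le_div_iff₀ (by positivity)]
    nlinarith [Int.sub_one_lt_floor (x a * (n+1))]
  have hqrat : ∀ n a, ∃ r : ℚ, q n a = (r:ℝ) := by
    intro n a
    refine ⟨(⌊x a * (n+1)⌋ : ℚ) / ((n:ℚ)+1), ?_⟩
    rw [hq]; push_cast; ring
  choose r hr using hqrat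
  have hqten : ∀ a, Tendsto (fun n => q n a) atTop (𝓝 (x a)) := by
    intro a
    have hub : Tendsto (fun _ : ℕ => x a) atTop (𝓝 (x a)) := tendsto_const_nhds
    have hlb : Tendsto (fun n : ℕ => x a - 1/(n+1)) atTop (𝓝 (x a)) := by
      simpa using hub.sub tendsto_one_div_add_atTop_nhds_zero_nat
    exact tendsto_of_tendsto_of_tendsto_of_le_of_le hlb hub (fun n => hqlb n a) (fun n => hqle n a)
  have hxsplit : x a₀ + ∑ a' ∈ Finset.univ.erase a₀, x a' = 1 := by
    rw [Finset.add_sum_erase _ _ (Finset.mem_univ a₀)]; exact hx1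
  set ρ : ℕ → A → ℝ := fun n a => if a = a₀ then 1 - ∑ a' ∈ Finset.univ.erase a₀, q n a' else q n a
    with hρ
  have hρsplit : ∀ n, ρ n a₀ = 1 - ∑ a' ∈ Finset.univ.erase a₀, q n a' := fun n => if_pos rfl
  have hρne : ∀ n a, a ≠ a₀ → ρ n a = q n a := fun n a h => if_neg h
  refine ⟨ρ, ?_, ?_, ?_, ?_⟩
  · intro n
    have hsum : ∑ a' ∈ Finset.univ.erase a₀, q n a' ≤ ∑ a' ∈ Finset.univ.erase a₀, x a' :=
      Finset.sum_le_sum fun a' _ => hqle n a'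
    constructor
    · intro a
      by_cases h : a = a₀
      · subst h; rw [hρsplit n]; linarith
      · rw [hρne n a h]; exact hq0 n a
    · rw [← Finset.add_sum_erase _ _ (Finset.mem_univ a₀), hρsplit n,
        Finset.sum_congr rfl (fun a' ha' => hρne n a' (Finset.ne_of_mem_erase ha'))]
      ring
  · intro n a
    by_cases h : a = a₀
    · subst h
      refine ⟨1 - ∑ a' ∈ Finset.univ.erase a, r n a', ?_⟩
      rw [hρsplit n]
      simp only [hr]
      push_cast
      ring
    · exact ⟨r n a, by rw [hρne n a h]; exact hr n a⟩
  · intro n a hxa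
    have h : a ≠ a₀ := fun h => by subst h; rw [hxa] at ha₀; exact lt_irrefl _ ha₀
    rw [hρne n a h, hq]
    simp [hxa]
  · intro a
    by_cases h : a = a₀
    · subst h
      have hten : Tendsto (fun n => ∑ a' ∈ Finset.univ.erase a, q n a') atTop
          (𝓝 (∑ a' ∈ Finset.univ.erase a, x a')) :=
        tendsto_finset_sum _ fun a' _ => hqten a'
      have h2 := (tendsto_const_nhds (x := (1:ℝ)) (f := atTop (α := ℕ))).sub hten
      have hxa : 1 - ∑ a' ∈ Finset.univ.erase a, x a' = x a := by linarith
      simp only [hρsplit]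
      rwa [hxa] at h2
    · simp only [hρne _ _ h]
      exact hqten a

/-- No point of the payoff region strictly exceeds `v1` in the first coordinate while
exceeding `v2` in the second, given the Pareto property for rational points. -/
lemma hQlem (f g : A₁ → A₂ → ℝ) (v1 v2 : ℝ)
    (hPD2 : ∀ x ∈ stdSimplex ℝ A₁, ∀ y ∈ stdSimplex ℝ A₂,
      (∀ a, ∃ q : ℚ, x a = (q:ℝ)) → (∀ b, ∃ q : ℚ, y b = (q:ℝ)) →
      v1 ≤ Bl f x y → v2 ≤ Bl g x y → Bl f x y = v1 ∧ Bl g x y = v2) :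
    ∀ x ∈ stdSimplex ℝ A₁, ∀ y ∈ stdSimplex ℝ A₂, v1 < Bl f x y → Bl g x y ≤ v2 := by
  intro x hx y hy hf
  by_contra hg
  push_neg at hg
  obtain ⟨ρ₁, hm1, hr1, _, ht1⟩ := exists_rat_approx x hx
  obtain ⟨ρ₂, hm2, hr2, _, ht2⟩ := exists_rat_approx y hy
  have evf := (Bl_tendsto f ht1 ht2).eventually_const_lt hf
  have evg := (Bl_tendsto g ht1 ht2).eventually_const_lt hg
  obtain ⟨n, hnf, hng⟩ := (evf.and evg).exists
  obtain ⟨heqf, -⟩ := hPD2 (ρ₁ n) (hm1 n) (ρ₂ n) (hm2 n) (hr1 n) (hr2 n) hnf.le hng.le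
  exact absurd heqf (ne_of_gt hnf)

/-- Key lemma: a point of the payoff region on the boundary `Bl g = v2` with
`Bl f > v1` leads to a contradiction with the Pareto property for rational points. -/
lemma auxlem (f g : A₁ → A₂ → ℝ) (v1 v2 : ℝ)
    (hPD2 : ∀ x ∈ stdSimplex ℝ A₁, ∀ y ∈ stdSimplex ℝ A₂,
      (∀ a, ∃ q : ℚ, x a = (q:ℝ)) → (∀ b, ∃ q : ℚ, y b = (q:ℝ)) →
      v1 ≤ Bl f x y → v2 ≤ Bl g x y → Bl f x y = v1 ∧ Bl g x y = v2)
    (x : A₁ → ℝ) (y : A₂ → ℝ) (hx : x ∈ stdSimplex ℝ A₁) (hy : y ∈ stdSimplex ℝ A₂)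
    (h1 : v1 < Bl f x y) (h2 : Bl g x y = v2) : False := by
  have hQ := hQlem f g v1 v2 hPD2
  set u : ℕ → ℝ := fun n => 1/(n+1) with hudef
  have hu : Tendsto u atTop (𝓝 0) := tendsto_one_div_add_atTop_nhds_zero_nat
  have hupos : ∀ n, 0 < u n := fun n => by positivity
  have hule : ∀ n, u n ≤ 1 := by
    intro n
    rw [hudef, div_le_one (by positivity)]
    simp
  -- first-order conditions for player 1
  have hm : ∀ a : A₁, rowB g a y ≤ v2 := by
    intro a
    have hmem : ∀ n, pt x a (u n) ∈ stdSimplex ℝ A₁ := fun n =>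
      pt_mem x hx a (u n) (le_trans (neg_nonpos.2 (hx.1 a)) (hupos n).le) (hule n)
    have hten : Tendsto (fun n => Bl f (pt x a (u n)) y) atTop (𝓝 (Bl f x y)) := by
      simp only [Bl_pt_left]
      simpa using tendsto_combo (Bl f x y) (Bl f x y) (rowB f a y) (rowB f a y) hu
        (tendsto_const_nhds (x := (0:ℝ)))
    obtain ⟨n, hn⟩ := (hten.eventually_const_lt h1).exists
    have hle := hQ _ (hmem n) y hy hn
    rw [Bl_pt_left, h2] at hle
    nlinarith [hupos n]
  have hmsum : ∑ a, x a * (rowB g a y - v2) = 0 := by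
    have h' : ∑ a, x a * rowB g a y = v2 := by rw [← Bl_eq_row, h2]
    have h'' : ∑ a, x a * v2 = v2 := by rw [← Finset.sum_mul, hx.2, one_mul]
    simp only [mul_sub, Finset.sum_sub_distrib, h', h'']
    ring
  have hm0 : ∀ a : A₁, 0 < x a → rowB g a y = v2 := by
    intro a ha
    have hz := (Finset.sum_eq_zero_iff_of_nonpos (fun a _ =>
      mul_nonpos_of_nonneg_of_nonpos (hx.1 a) (sub_nonpos.2 (hm a)))).1 hmsum a (Finset.mem_univ a)
    have := mul_eq_zero.1 hz
    rcases this with h | h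
    · exact absurd h (ne_of_gt ha)
    · linarith [sub_eq_zero.1 h]
  -- first-order conditions for player 2
  have hn : ∀ b : A₂, colB g x b ≤ v2 := by
    intro b
    have hmem : ∀ n, pt y b (u n) ∈ stdSimplex ℝ A₂ := fun n =>
      pt_mem y hy b (u n) (le_trans (neg_nonpos.2 (hy.1 b)) (hupos n).le) (hule n)
    have hten : Tendsto (fun n => Bl f x (pt y b (u n))) atTop (𝓝 (Bl f x y)) := by
      simp only [Bl_pt_right]
      simpa using tendsto_combo (Bl f x y) (Bl f x y) (colB f x b) (colB f x b) hu
        (tendsto_const_nhds (x := (0:ℝ)))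
    obtain ⟨n, hnn⟩ := (hten.eventually_const_lt h1).exists
    have hle := hQ x hx _ (hmem n) hnn
    rw [Bl_pt_right, h2] at hle
    nlinarith [hupos n]
  have hnsum : ∑ b, y b * (colB g x b - v2) = 0 := by
    have h' : ∑ b, y b * colB g x b = v2 := by rw [← Bl_eq_col, h2]
    have h'' : ∑ b, y b * v2 = v2 := by rw [← Finset.sum_mul, hy.2, one_mul]
    simp only [mul_sub, Finset.sum_sub_distrib, h', h'']
    ring
  have hn0 : ∀ b : A₂, 0 < y b → colB g x b = v2 := by
    intro b hb
    have hz := (Finset.sum_eq_zero_iff_of_nonpos (fun b _ =>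
      mul_nonpos_of_nonneg_of_nonpos (hy.1 b) (sub_nonpos.2 (hn b)))).1 hnsum b (Finset.mem_univ b)
    rcases mul_eq_zero.1 hz with h | h
    · exact absurd h (ne_of_gt hb)
    · linarith [sub_eq_zero.1 h]
  -- second-order condition: g is constant = v2 on the support
  have hg0 : ∀ (a : A₁) (b : A₂), 0 < x a → 0 < y b → g a b = v2 := by
    intro a b ha hb
    have hmemx : ∀ n, pt x a (u n) ∈ stdSimplex ℝ A₁ := fun n =>
      pt_mem x hx a (u n) (le_trans (neg_nonpos.2 (hx.1 a)) (hupos n).le) (hule n)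
    have hmemy : ∀ n, pt y b (u n) ∈ stdSimplex ℝ A₂ := fun n =>
      pt_mem y hy b (u n) (le_trans (neg_nonpos.2 (hy.1 b)) (hupos n).le) (hule n)
    -- direction 1 : t = s = u n gives g a b ≤ v2
    have hle : g a b ≤ v2 := by
      have hten : Tendsto (fun n => Bl f (pt x a (u n)) (pt y b (u n))) atTop
          (𝓝 (Bl f x y)) := by
        simp only [Bl_pt_pt]
        exact tendsto_combo (Bl f x y) (colB f x b) (rowB f a y) (f a b) hu hu
      obtain ⟨n, hnn⟩ := (hten.eventually_const_lt h1).exists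
      have hq := hQ _ (hmemx n) _ (hmemy n) hnn
      rw [Bl_pt_pt, h2, hm0 a ha, hn0 b hb] at hq
      nlinarith [hupos n, mul_pos (hupos n) (hupos n)]
    -- direction 2 : t = u n, s = -u n gives g a b ≥ v2
    have hge : v2 ≤ g a b := by
      have hmemy' : ∀ᶠ n in atTop, pt y b (-u n) ∈ stdSimplex ℝ A₂ := by
        filter_upwards [hu.eventually_lt_const hb] with n hn'
        exact pt_mem y hy b (-u n) (by linarith) (by linarith [hupos n])
      have hten : Tendsto (fun n => Bl f (pt x a (u n)) (pt y b (-u n))) atTop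
          (𝓝 (Bl f x y)) := by
        simp only [Bl_pt_pt]
        exact tendsto_combo (Bl f x y) (colB f x b) (rowB f a y) (f a b) hu
          (by simpa using hu.neg)
      obtain ⟨n, hnn, hmem'⟩ := ((hten.eventually_const_lt h1).and hmemy').exists
      have hq := hQ _ (hmemx n) _ hmem' hnn
      rw [Bl_pt_pt, h2, hm0 a ha, hn0 b hb] at hq
      nlinarith [hupos n, mul_pos (hupos n) (hupos n)]
    linarith
  -- final step: rational approximation supported on the support of (x, y)
  obtain ⟨ρ₁, hm1, hr1, hs1, ht1⟩ := exists_rat_approx x hx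
  obtain ⟨ρ₂, hm2, hr2, hs2, ht2⟩ := exists_rat_approx y hy
  have hBg : ∀ n, Bl g (ρ₁ n) (ρ₂ n) = v2 := by
    intro n
    have hterm : ∀ (a : A₁) (b : A₂), ρ₁ n a * ρ₂ n b * g a b = ρ₁ n a * ρ₂ n b * v2 := by
      intro a b
      by_cases h1' : ρ₁ n a = 0
      · rw [h1']; ring
      by_cases h2' : ρ₂ n b = 0
      · rw [h2']; ring
      have hxa : 0 < x a := by
        rcases lt_or_eq_of_le (hx.1 a) with h | h
        · exact h
        · exact absurd (hs1 n a h.symm) h1'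
      have hyb : 0 < y b := by
        rcases lt_or_eq_of_le (hy.1 b) with h | h
        · exact h
        · exact absurd (hs2 n b h.symm) h2'
      rw [hg0 a b hxa hyb]
    have : Bl g (ρ₁ n) (ρ₂ n) = Bl (fun _ _ => v2) (ρ₁ n) (ρ₂ n) := by
      rw [Bl, Bl]
      exact Finset.sum_congr rfl fun a _ => Finset.sum_congr rfl fun b _ => hterm a b
    rw [this, Bl_const v2 (hm1 n).2 (hm2 n).2]
  have evf := (Bl_tendsto f ht1 ht2).eventually_const_lt h1
  obtain ⟨n, hnf⟩ := evf.exists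
  obtain ⟨heqf, -⟩ := hPD2 (ρ₁ n) (hm1 n) (ρ₂ n) (hm2 n) (hr1 n) (hr2 n) hnf.le (hBg n).ge
  exact absurd heqf (ne_of_gt hnf)

end Helpers

/-- The bilinear extension of the payoff pair function of a two-player finite game. -/
noncomputable def mixedPayoff₂ {A₁ A₂ : Type*} [Fintype A₁] [Fintype A₂]
    (u : A₁ → A₂ → ℝ × ℝ) (σ₁ : A₁ → ℝ) (σ₂ : A₂ → ℝ) : ℝ × ℝ :=
  ∑ a₁ : A₁, ∑ a₂ : A₂, (σ₁ a₁ * σ₂ a₂) • u a₁ a₂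

lemma mixedPayoff₂_eq {A₁ A₂ : Type*} [Fintype A₁] [Fintype A₂]
    (u : A₁ → A₂ → ℝ × ℝ) (σ₁ : A₁ → ℝ) (σ₂ : A₂ → ℝ) :
    mixedPayoff₂ u σ₁ σ₂ =
      (Bl (fun a b => (u a b).1) σ₁ σ₂, Bl (fun a b => (u a b).2) σ₁ σ₂) := by
  rw [mixedPayoff₂, Bl, Bl, Prod.ext_iff]
  constructor
  · rw [Prod.fst_sum]
    refine Finset.sum_congr rfl fun a _ => ?_
    rw [Prod.fst_sum]
    exact Finset.sum_congr rfl fun b _ => rfl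
  · rw [Prod.snd_sum]
    refine Finset.sum_congr rfl fun a _ => ?_
    rw [Prod.snd_sum]
    exact Finset.sum_congr rfl fun b _ => rfl

/-- For a two-player finite strategic game, `P(R_nc) ⊆ P(S_nc)`, where
`R_nc` is the set of payoff pairs of rational mixed-strategy profiles and `S_nc` the
noncooperative payoff region. -/
theorem stmt15 {A₁ A₂ : Type*} [Fintype A₁] [Fintype A₂] [Nonempty A₁] [Nonempty A₂]
    (u : A₁ → A₂ → ℝ × ℝ)
    (Snc Rnc : Set (ℝ × ℝ))
    (hSnc : Snc = {v | ∃ σ₁ ∈ stdSimplex ℝ A₁, ∃ σ₂ ∈ stdSimplex ℝ A₂,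
      v = mixedPayoff₂ u σ₁ σ₂})
    (hRnc : Rnc = {v | ∃ σ₁ ∈ stdSimplex ℝ A₁, ∃ σ₂ ∈ stdSimplex ℝ A₂,
      (∀ a₁, ∃ r : ℚ, σ₁ a₁ = (r : ℝ)) ∧ (∀ a₂, ∃ r : ℚ, σ₂ a₂ = (r : ℝ)) ∧
      v = mixedPayoff₂ u σ₁ σ₂})
    (v : ℝ × ℝ) (hv : v ∈ Rnc)
    (hPD : ∀ w ∈ Rnc, v.1 ≤ w.1 → v.2 ≤ w.2 → w = v) :
    ∀ w ∈ Snc, v.1 ≤ w.1 → v.2 ≤ w.2 → w = v := by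
  subst hSnc hRnc
  intro w hw hw1 hw2
  obtain ⟨σ₁, hσ₁, σ₂, hσ₂, hweq⟩ := hw
  set f : A₁ → A₂ → ℝ := fun a b => (u a b).1 with hf
  set g : A₁ → A₂ → ℝ := fun a b => (u a b).2 with hg
  have hPD2 : ∀ x ∈ stdSimplex ℝ A₁, ∀ y ∈ stdSimplex ℝ A₂,
      (∀ a, ∃ q : ℚ, x a = (q:ℝ)) → (∀ b, ∃ q : ℚ, y b = (q:ℝ)) →
      v.1 ≤ Bl f x y → v.2 ≤ Bl g x y → Bl f x y = v.1 ∧ Bl g x y = v.2 := by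
    intro x hx y hy hrx hry h1 h2
    have hmem : mixedPayoff₂ u x y ∈ {v | ∃ σ₁ ∈ stdSimplex ℝ A₁, ∃ σ₂ ∈ stdSimplex ℝ A₂,
        (∀ a₁, ∃ r : ℚ, σ₁ a₁ = (r : ℝ)) ∧ (∀ a₂, ∃ r : ℚ, σ₂ a₂ = (r : ℝ)) ∧
        v = mixedPayoff₂ u σ₁ σ₂} := ⟨x, hx, y, hy, hrx, hry, rfl⟩
    have heq := hPD _ hmem (by rw [mixedPayoff₂_eq]; exact h1) (by rw [mixedPayoff₂_eq]; exact h2)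
    rw [mixedPayoff₂_eq, Prod.ext_iff] at heq
    exact heq
  have hPD2' : ∀ y ∈ stdSimplex ℝ A₂, ∀ x ∈ stdSimplex ℝ A₁,
      (∀ b, ∃ q : ℚ, y b = (q:ℝ)) → (∀ a, ∃ q : ℚ, x a = (q:ℝ)) →
      v.2 ≤ Bl (fun b a => g a b) y x → v.1 ≤ Bl (fun b a => f a b) y x →
      Bl (fun b a => g a b) y x = v.2 ∧ Bl (fun b a => f a b) y x = v.1 := by
    intro y hy x hx hry hrx h2 h1
    have hswap : ∀ (φ : A₁ → A₂ → ℝ), Bl (fun b a => φ a b) y x = Bl φ x y := by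
      intro φ
      rw [Bl, Bl, Finset.sum_comm]
      exact Finset.sum_congr rfl fun a _ => Finset.sum_congr rfl fun b _ => by ring
    rw [hswap] at h1 h2 ⊢
    rw [hswap]
    obtain ⟨hf', hg'⟩ := hPD2 x hx y hy hrx hry h1 h2
    exact ⟨hg', hf'⟩
  have hwf : w.1 = Bl f σ₁ σ₂ := by rw [hweq, mixedPayoff₂_eq]
  have hwg : w.2 = Bl g σ₁ σ₂ := by rw [hweq, mixedPayoff₂_eq]
  rcases lt_or_eq_of_le hw1 with h1 | h1
  · -- v.1 < w.1 : then Bl g σ₁ σ₂ ≤ v.2 by hQlem, so = v.2, contradiction via auxlem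
    rw [hwf] at h1
    have hle := hQlem f g v.1 v.2 hPD2 σ₁ hσ₁ σ₂ hσ₂ h1
    have heq2 : Bl g σ₁ σ₂ = v.2 := le_antisymm hle (by rw [← hwg]; exact hw2)
    exact absurd (auxlem f g v.1 v.2 hPD2 σ₁ σ₂ hσ₁ hσ₂ h1 heq2) (fun h => h)
  · rcases lt_or_eq_of_le hw2 with h2 | h2
    · -- v.2 < w.2, v.1 = w.1 : symmetric case
      rw [hwg] at h2
      have h2' : v.2 < Bl (fun b a => g a b) σ₂ σ₁ := by
        have hswap : Bl (fun b a => g a b) σ₂ σ₁ = Bl g σ₁ σ₂ := by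
          rw [Bl, Bl, Finset.sum_comm]
          exact Finset.sum_congr rfl fun a _ => Finset.sum_congr rfl fun b _ => by ring
        rw [hswap]; exact h2
      have heq1 : Bl (fun b a => f a b) σ₂ σ₁ = v.1 := by
        have hswap : Bl (fun b a => f a b) σ₂ σ₁ = Bl f σ₁ σ₂ := by
          rw [Bl, Bl, Finset.sum_comm]
          exact Finset.sum_congr rfl fun a _ => Finset.sum_congr rfl fun b _ => by ring
        rw [hswap, ← hwf]; exact h1.symm
      exact absurd (auxlem (fun b a => g a b) (fun b a => f a b) v.2 v.1
        (fun y hy x hx hry hrx hg2 hf1 => hPD2' y hy x hx hry hrx hg2 hf1)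
        σ₂ σ₁ hσ₂ hσ₁ h2' heq1) (fun h => h)
    · exact Prod.ext h1.symm h2.symm
end
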